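/- Let (C, A) be an output-stable pair with observability operator O_{C,A} : X → H_Y(k_d), O_{C,A} x = C(I - λ₁A₁ - ⋯ - λ_dA_d)⁻¹x. Then the reproducing kernel Hilbert space H(K_{C,A}) with kernel K_{C,A}(λ,ζ) = C(I - Z(λ)A)⁻¹(I - A*Z(ζ)*)⁻¹C* equals Ran O_{C,A}, with ‖O_{C,A} x‖_{H(K_{C,A})} = ‖Qx‖_X where Q is the orthogonal projection onto (Ker O_{C,A})^⊥; in particular O_{C,A} : X → H(K_{C,A}) is an isometry if and only if (C,A) is observable. -/

import Mathlib

open ContinuousLinearMap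

/-- An (abstract) realization of the reproducing kernel Hilbert space of an
`L(V)`-valued positive kernel `k` on `Ω`. -/
structure RKHS' (Ω : Type*) (V : Type*) [NormedAddCommGroup V] [InnerProductSpace ℂ V]
    (k : Ω → Ω → V →L[ℂ] V)
    (H : Type*) [NormedAddCommGroup H] [InnerProductSpace ℂ H] where
  toFun : H →ₗ[ℂ] (Ω → V)
  kElem : Ω → V → H
  kElem_apply : ∀ (ζ : Ω) (v : V) (l : Ω), toFun (kElem ζ v) l = k l ζ v
  reproducing : ∀ (f : H) (ζ : Ω) (v : V),
    (inner ℂ (kElem ζ v) f : ℂ) = inner ℂ v (toFun f ζ)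
  dense_span :
    (Submodule.span ℂ (Set.range fun p : Ω × V => kElem p.1 p.2)).topologicalClosure = ⊤

set_option maxHeartbeats 1000000 in
theorem rkhs_aux {Ω X Y : Type*}
    [NormedAddCommGroup X] [InnerProductSpace ℂ X] [CompleteSpace X]
    [NormedAddCommGroup Y] [InnerProductSpace ℂ Y] [CompleteSpace Y]
    {H : Type*} [NormedAddCommGroup H] [InnerProductSpace ℂ H] [CompleteSpace H]
    (O : Ω → X →L[ℂ] Y)
    (r : RKHS' Ω Y (fun l z => O l ∘L adjoint (O z)) H) :
    ∃ Ohat : X →L[ℂ] H,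
      (∀ (x : X) (l : Ω), r.toFun (Ohat x) l = O l x) ∧
      Function.Surjective Ohat ∧
      (∀ (x p : X), p ∈ (LinearMap.ker (Ohat : X →ₗ[ℂ] H))ᗮ → x - p ∈ LinearMap.ker (Ohat : X →ₗ[ℂ] H) →
        ‖Ohat x‖ = ‖p‖) ∧
      ((∀ x : X, ‖Ohat x‖ = ‖x‖) ↔ Function.Injective Ohat) := by
  classical
  set g : Ω × Y → H := fun p => r.kElem p.1 p.2 with hg
  set t : Ω × Y → X := fun p => adjoint (O p.1) p.2 with ht
  set G : ((Ω × Y) →₀ ℂ) →ₗ[ℂ] H := Finsupp.linearCombination ℂ g with hGdef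
  set F : ((Ω × Y) →₀ ℂ) →ₗ[ℂ] X := Finsupp.linearCombination ℂ t with hFdef
  have key : ∀ i j : Ω × Y, (inner ℂ (g i) (g j) : ℂ) = inner ℂ (t i) (t j) := by
    intro i j
    have h1 := r.reproducing (r.kElem j.1 j.2) i.1 i.2
    rw [r.kElem_apply] at h1
    simp only [ContinuousLinearMap.comp_apply] at h1
    show (inner ℂ (r.kElem i.1 i.2) (r.kElem j.1 j.2) : ℂ)
      = inner ℂ (adjoint (O i.1) i.2) (adjoint (O j.1) j.2)
    rw [h1, ← ContinuousLinearMap.adjoint_inner_left]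
  have key2 : ∀ c c' : (Ω × Y) →₀ ℂ, (inner ℂ (G c) (G c') : ℂ) = inner ℂ (F c) (F c') := by
    intro c c'
    rw [hGdef, hFdef]
    simp only [Finsupp.linearCombination_apply, Finsupp.sum, sum_inner, inner_sum,
      inner_smul_left, inner_smul_right, key]
  have keyn : ∀ c : (Ω × Y) →₀ ℂ, ‖G c‖ = ‖F c‖ := by
    intro c
    rw [@norm_eq_sqrt_re_inner ℂ, @norm_eq_sqrt_re_inner ℂ, key2]
  have hker : LinearMap.ker G ≤ LinearMap.ker F := by
    intro c hc
    rw [LinearMap.mem_ker] at hc ⊢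
    rw [← norm_eq_zero, ← keyn c, hc, norm_zero]
  set M : Submodule ℂ H := LinearMap.range G with hMdef
  have hMtop : M.topologicalClosure = ⊤ := by
    rw [hMdef, hGdef, Finsupp.range_linearCombination]
    exact r.dense_span
  set S₀ : M →ₗ[ℂ] X :=
    ((LinearMap.ker G).liftQ F hker) ∘ₗ (LinearMap.quotKerEquivRange G).symm.toLinearMap
    with hS₀def
  have hS₀app : ∀ (c : (Ω × Y) →₀ ℂ) (h : G c ∈ M), S₀ ⟨G c, h⟩ = F c := by
    intro c h
    have h2 : (LinearMap.quotKerEquivRange G).symm ⟨G c, h⟩ = Submodule.Quotient.mk c := by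
      rw [LinearEquiv.symm_apply_eq]
      exact Subtype.ext (LinearMap.quotKerEquivRange_apply_mk G c).symm
    rw [hS₀def, LinearMap.comp_apply, LinearEquiv.coe_toLinearMap, h2,
      Submodule.liftQ_apply]
  have hS₀norm : ∀ m : M, ‖S₀ m‖ = ‖m‖ := by
    rintro ⟨mv, hm⟩
    obtain ⟨c, rfl⟩ := hm
    rw [hS₀app c ⟨c, rfl⟩]
    exact (keyn c).symm
  set Siso : M →ₗᵢ[ℂ] X := ⟨S₀, hS₀norm⟩ with hSiso
  set e : M →L[ℂ] H := M.subtypeL with hedef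
  have h_dense : DenseRange e :=
    (Submodule.dense_iff_topologicalClosure_eq_top.mpr hMtop).denseRange_val
  have h_e : IsUniformInducing e := isometry_subtype_coe.isUniformInducing
  set S : H →L[ℂ] X := Siso.toContinuousLinearMap.extend e with hSdef
  have hSm : ∀ m : M, S (m : H) = S₀ m := fun m =>
    ContinuousLinearMap.extend_eq Siso.toContinuousLinearMap h_dense h_e m
  have hSnorm : ∀ h : H, ‖S h‖ = ‖h‖ := by
    have hcl : IsClosed {h : H | ‖S h‖ = ‖h‖} :=
      isClosed_eq S.continuous.norm continuous_norm
    have hsub : (M : Set H) ⊆ {h : H | ‖S h‖ = ‖h‖} := by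
      intro m hm
      have := hSm ⟨m, hm⟩
      simp only [Set.mem_setOf_eq, this]
      exact hS₀norm ⟨m, hm⟩
    intro h
    have hd : Dense (M : Set H) := Submodule.dense_iff_topologicalClosure_eq_top.mpr hMtop
    exact closure_minimal hsub hcl (hd h)
  set SL : H →ₗᵢ[ℂ] X := ⟨(S : H →ₗ[ℂ] X), hSnorm⟩ with hSL
  have hOS : ∀ h : H, adjoint S (S h) = h := by
    intro h
    apply ext_inner_left ℂ
    intro f
    rw [ContinuousLinearMap.adjoint_inner_right]
    exact SL.inner_map_map f h
  have hSkel : ∀ (ζ : Ω) (v : Y), S (r.kElem ζ v) = adjoint (O ζ) v := by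
    intro ζ v
    have h1 : r.kElem ζ v = G (Finsupp.single (ζ, v) 1) := by
      rw [hGdef]
      simp [hg, Finsupp.linearCombination_single]
    have hm : r.kElem ζ v ∈ M := ⟨Finsupp.single (ζ, v) 1, h1.symm⟩
    have h2 : S (r.kElem ζ v) = S₀ ⟨r.kElem ζ v, hm⟩ := hSm ⟨r.kElem ζ v, hm⟩
    have h3 : (⟨r.kElem ζ v, hm⟩ : M) = ⟨G (Finsupp.single (ζ, v) 1), h1 ▸ hm⟩ :=
      Subtype.ext h1
    rw [h2, h3, hS₀app]
    rw [hFdef]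
    simp [ht, Finsupp.linearCombination_single]
  have hP3 : ∀ x p : X, p ∈ (LinearMap.ker (adjoint S : X →ₗ[ℂ] H))ᗮ →
      x - p ∈ LinearMap.ker (adjoint S : X →ₗ[ℂ] H) → ‖adjoint S x‖ = ‖p‖ := by
    intro x p hp hxp
    rw [LinearMap.mem_ker] at hxp
    have hOx : adjoint S x = adjoint S p := by
      have h4 : adjoint S x - adjoint S p = 0 := by rw [← map_sub]; exact hxp
      exact sub_eq_zero.mp h4
    rw [hOx]
    have hmem : p - S (adjoint S p) ∈ LinearMap.ker (adjoint S : X →ₗ[ℂ] H) := by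
      rw [LinearMap.mem_ker, ContinuousLinearMap.coe_coe, map_sub, hOS, sub_self]
    have h0 : (inner ℂ (p - S (adjoint S p)) p : ℂ) = 0 := hp _ hmem
    rw [inner_sub_left, sub_eq_zero] at h0
    have h2 : (inner ℂ (adjoint S p) (adjoint S p) : ℂ) = inner ℂ (S (adjoint S p)) p :=
      ContinuousLinearMap.adjoint_inner_right S (adjoint S p) p
    have h5 : (inner ℂ (adjoint S p) (adjoint S p) : ℂ) = inner ℂ p p := by rw [h2, ← h0]
    rw [inner_self_eq_norm_sq_to_K, inner_self_eq_norm_sq_to_K] at h5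
    have h6 : ‖adjoint S p‖ ^ 2 = ‖p‖ ^ 2 := by exact_mod_cast h5
    nlinarith [norm_nonneg (adjoint S p), norm_nonneg p]
  refine ⟨adjoint S, ?_, ?_, hP3, ?_⟩
  · intro x l
    apply ext_inner_left ℂ
    intro v
    rw [← r.reproducing (adjoint S x) l v, ContinuousLinearMap.adjoint_inner_right,
      hSkel, ContinuousLinearMap.adjoint_inner_left]
  · exact fun h => ⟨S h, hOS h⟩
  · constructor
    · intro hiso a b hab
      have h7 := hiso (a - b)
      rw [map_sub, hab, sub_self, norm_zero] at h7
      exact sub_eq_zero.mp (norm_eq_zero.mp h7.symm)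
    · intro hinj x
      have hk : LinearMap.ker (adjoint S : X →ₗ[ℂ] H) = ⊥ := LinearMap.ker_eq_bot.mpr hinj
      refine hP3 x x ?_ ?_
      · rw [hk, Submodule.bot_orthogonal_eq_top]; trivial
      · rw [sub_self]; exact (LinearMap.ker (adjoint S : X →ₗ[ℂ] H)).zero_mem

set_option maxHeartbeats 2000000

/-- For a contractive (hence output-stable) pair `(C, A)`, the RKHS `H(K_{C,A})`
of the kernel `K_{C,A}(λ,ζ) = C(I-Z(λ)A)⁻¹(I-A*Z(ζ)*)⁻¹C*` on the unit ball is
the range of the observability operator `O_{C,A} : x ↦ C(I - ∑ λⱼAⱼ)⁻¹x`, with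
`‖O_{C,A}x‖ = ‖Qx‖` where `Q` is the orthogonal projection onto
`(Ker O_{C,A})ᗮ`; in particular `O_{C,A} : X → H(K_{C,A})` is an isometry iff
`(C,A)` is observable (i.e. `O_{C,A}` is injective). -/
theorem stmt12 {d : ℕ}
    {X Y : Type*}
    [NormedAddCommGroup X] [InnerProductSpace ℂ X] [CompleteSpace X]
    [NormedAddCommGroup Y] [InnerProductSpace ℂ Y] [CompleteSpace Y]
    (A : Fin d → X →L[ℂ] X) (C : X →L[ℂ] Y)
    (hc : ((1 : X →L[ℂ] X) -
      ((∑ j, adjoint (A j) ∘L A j) + adjoint C ∘L C)).IsPositive)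
    {H : Type*} [NormedAddCommGroup H] [InnerProductSpace ℂ H] [CompleteSpace H]
    (r : RKHS' {l : EuclideanSpace ℂ (Fin d) // ‖l‖ < 1} Y
      (fun l z =>
        (C ∘L Ring.inverse (1 - ∑ j, l.1 j • A j)) ∘L
          adjoint (C ∘L Ring.inverse (1 - ∑ j, z.1 j • A j))) H) :
    ∃ Ohat : X →L[ℂ] H,
      (∀ (x : X) (l : {l : EuclideanSpace ℂ (Fin d) // ‖l‖ < 1}),
        r.toFun (Ohat x) l = C (Ring.inverse (1 - ∑ j, l.1 j • A j) x)) ∧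
      Function.Surjective Ohat ∧
      (∀ (x p : X), p ∈ (LinearMap.ker (Ohat : X →ₗ[ℂ] H))ᗮ → x - p ∈ LinearMap.ker (Ohat : X →ₗ[ℂ] H) →
        ‖Ohat x‖ = ‖p‖) ∧
      ((∀ x : X, ‖Ohat x‖ = ‖x‖) ↔ Function.Injective Ohat) := by
  have h := rkhs_aux (fun l : {l : EuclideanSpace ℂ (Fin d) // ‖l‖ < 1} =>
    C ∘L Ring.inverse (1 - ∑ j, l.1 j • A j)) r
  exact h
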